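/- If two RLFTSs N and N′ are fluid bisimulation equivalent, then they are fluid trace equivalent: N ↔fl N′ implies N ≡fl N′. -/

import Mathlib

open scoped BigOperators

/-- A rated labeled fluid transition system (RLFTS) over a type `Act` of actions. -/
structure RLFTS (Act : Type) where
  S : Type
  E : Type
  s0 : S
  src : E → S
  tgt : E → S
  rate : E → ℝ
  label : E → Act
  RP : S → ℝ
  rate_pos : ∀ e, 0 < rate e
  out_finite : ∀ s : S, {e : E | src e = s}.Finite
  out_nonempty : ∀ s : S, ∃ e : E, src e = s

namespace RLFTS

variable {Act : Type}

/-- Exit rate of a state. -/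
noncomputable def RE (N : RLFTS Act) (s : N.S) : ℝ :=
  ∑ᶠ e ∈ {e : N.E | N.src e = s}, N.rate e

/-- Average sojourn time in a state. -/
noncomputable def SJ (N : RLFTS Act) (s : N.S) : ℝ := 1 / N.RE s

/-- Firing probability of an edge. -/
noncomputable def PTe (N : RLFTS Act) (e : N.E) : ℝ := N.rate e / N.RE (N.src e)

/-- `IsPathFrom N M es` : the list of edges `es` is a path starting in the state `M`. -/
def IsPathFrom (N : RLFTS Act) : N.S → List N.E → Prop
  | _, [] => True
  | M, e :: es => N.src e = M ∧ IsPathFrom N (N.tgt e) es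

/-- The list of states visited by a path starting in `M`. -/
def visits (N : RLFTS Act) : N.S → List N.E → List N.S
  | M, [] => [M]
  | M, e :: es => M :: visits N (N.tgt e) es

/-- Execution probability of a path. -/
noncomputable def pathPT (N : RLFTS Act) (es : List N.E) : ℝ := (es.map N.PTe).prod

/-- Cumulative execution probability of the `(σ,ς,ϱ)`-selected paths starting in `M`. -/
noncomputable def PTsel (N : RLFTS Act) (M : N.S) (σ : List Act) (ς ϱ : List ℝ) : ℝ :=
  ∑ᶠ es ∈ {es : List N.E | IsPathFrom N M es ∧ es.map N.label = σ ∧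
      (visits N M es).map N.SJ = ς ∧ (visits N M es).map N.RP = ϱ}, N.pathPT es

end RLFTS

namespace RLFTS

variable {Act : Type}

/-- Source map on the disjoint union of the edges of two RLFTSs. -/
def csrc (N N' : RLFTS Act) : N.E ⊕ N'.E → N.S ⊕ N'.S := Sum.map N.src N'.src

/-- Target map on the disjoint union of the edges of two RLFTSs. -/
def ctgt (N N' : RLFTS Act) : N.E ⊕ N'.E → N.S ⊕ N'.S := Sum.map N.tgt N'.tgt

/-- Rate function on the disjoint union of the edges of two RLFTSs. -/
def crate (N N' : RLFTS Act) : N.E ⊕ N'.E → ℝ := Sum.elim N.rate N'.rate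

/-- Labeling on the disjoint union of the edges of two RLFTSs. -/
def clabel (N N' : RLFTS Act) : N.E ⊕ N'.E → Act := Sum.elim N.label N'.label

/-- Fluid-rate function on the disjoint union of the states of two RLFTSs. -/
def cRP (N N' : RLFTS Act) : N.S ⊕ N'.S → ℝ := Sum.elim N.RP N'.RP

/-- Overall rate to move from the state `s` into the set of states `H` by action `a`,
in the disjoint union of two RLFTSs. -/
noncomputable def RMa (N N' : RLFTS Act) (a : Act) (s : N.S ⊕ N'.S)
    (H : Set (N.S ⊕ N'.S)) : ℝ :=
  ∑ᶠ e ∈ {e : N.E ⊕ N'.E | csrc N N' e = s ∧ clabel N N' e = a ∧ ctgt N N' e ∈ H},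
    crate N N' e

/-- `R` is a fluid bisimulation between the RLFTSs `N` and `N'`. -/
def FluidBisim (N N' : RLFTS Act) (R : (N.S ⊕ N'.S) → (N.S ⊕ N'.S) → Prop) : Prop :=
  Equivalence R ∧ R (Sum.inl N.s0) (Sum.inr N'.s0) ∧
    ∀ s1 s2, R s1 s2 → cRP N N' s1 = cRP N N' s2 ∧
      ∀ (a : Act) (s : N.S ⊕ N'.S), RMa N N' a s1 {v | R s v} = RMa N N' a s2 {v | R s v}

/-- The RLFTSs `N` and `N'` are fluid bisimulation equivalent. -/
def FluidBisimEquiv (N N' : RLFTS Act) : Prop := ∃ R, FluidBisim N N' R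

end RLFTS

namespace RLFTS

/-- The RLFTSs `N` and `N'` are fluid trace equivalent: the cumulative probabilities of the
`(σ,ς,ϱ)`-selected paths from the initial states coincide for every triple `(σ,ς,ϱ)` of lists
over `Act`, `ℝ_{>0}` and `ℝ`. -/
def FluidTraceEquiv {Act : Type} (N N' : RLFTS Act) : Prop :=
  ∀ (σ : List Act) (ς ϱ : List ℝ), (∀ x ∈ ς, 0 < x) →
    N.PTsel N.s0 σ ς ϱ = N'.PTsel N'.s0 σ ς ϱ

end RLFTS

namespace RLFTS

variable {Act : Type}

attribute [local instance] Classical.propDecidable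

/-- Overall rate within a single RLFTS. -/
noncomputable def RMs (M : RLFTS Act) (a : Act) (s : M.S) (H : Set M.S) : ℝ :=
  ∑ᶠ e ∈ {e : M.E | M.src e = s ∧ M.label e = a ∧ M.tgt e ∈ H}, M.rate e

/-- A fluid bisimulation on a single RLFTS. -/
def SelfBisim (M : RLFTS Act) (R : M.S → M.S → Prop) : Prop :=
  Equivalence R ∧ ∀ s1 s2, R s1 s2 → M.RP s1 = M.RP s2 ∧
    ∀ (a : Act) (w : M.S), M.RMs a s1 {v | R w v} = M.RMs a s2 {v | R w v}

/-- Finset of outgoing edges. -/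
noncomputable def outF (M : RLFTS Act) (s : M.S) : Finset M.E :=
  (M.out_finite s).toFinset

lemma mem_outF {M : RLFTS Act} {s : M.S} {e : M.E} : e ∈ M.outF s ↔ M.src e = s := by
  simp [outF]

lemma RE_eq_sum (M : RLFTS Act) (s : M.S) : M.RE s = ∑ e ∈ M.outF s, M.rate e :=
  finsum_mem_eq_finite_toFinset_sum _ (M.out_finite s)

section Quot

variable {M : RLFTS Act} {R : M.S → M.S → Prop} (sd : Setoid M.S)

lemma RMs_eq_filter (hsd : sd.r = R) (s : M.S) (a : Act) (w : M.S) :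
    M.RMs a s {v | R w v} =
      ∑ e ∈ (M.outF s).filter
        (fun e => M.label e = a ∧ Quotient.mk sd (M.tgt e) = Quotient.mk sd w),
        M.rate e := by
  have hset : {e : M.E | M.src e = s ∧ M.label e = a ∧ M.tgt e ∈ {v | R w v}} =
      ↑((M.outF s).filter
        (fun e => M.label e = a ∧ Quotient.mk sd (M.tgt e) = Quotient.mk sd w)) := by
    ext e
    simp only [Set.mem_setOf_eq, Finset.coe_filter, Set.mem_setOf_eq, mem_outF]
    constructor
    · rintro ⟨h1, h2, h3⟩
      refine ⟨h1, h2, Quotient.sound (sd.iseqv.symm ?_)⟩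
      show sd.r w (M.tgt e)
      rw [hsd]; exact h3
    · rintro ⟨h1, h2, h3⟩
      refine ⟨h1, h2, ?_⟩
      have h4 : sd.r (M.tgt e) w := Quotient.exact h3
      show R w (M.tgt e)
      rw [← hsd]
      exact sd.iseqv.symm h4
  rw [RMs, hset, finsum_mem_coe_finset]

lemma sum_out_eq (hsd : sd.r = R) (s : M.S) (a : Act) (g : Quotient sd → ℝ)
    (K : Finset (Quotient sd))
    (hK : ∀ e, M.src e = s → M.label e = a → Quotient.mk sd (M.tgt e) ∈ K) :
    ∑ e ∈ (M.outF s).filter (fun e => M.label e = a),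
        M.rate e * g (Quotient.mk sd (M.tgt e)) =
      ∑ q ∈ K, M.RMs a s {v | R q.out v} * g q := by
  have : ∀ q ∈ K, M.RMs a s {v | R q.out v} * g q =
      ∑ e ∈ ((M.outF s).filter (fun e => M.label e = a)).filter
        (fun e => Quotient.mk sd (M.tgt e) = q), M.rate e * g (Quotient.mk sd (M.tgt e)) := by
    intro q _
    rw [RMs_eq_filter sd hsd, Finset.sum_mul, Finset.filter_filter]
    apply Finset.sum_congr
    · apply Finset.filter_congr
      intro e _
      simp [Quotient.out_eq]
    · intro e he
      simp only [Finset.mem_filter] at he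
      rw [he.2.2]
  rw [Finset.sum_congr rfl this]
  exact (Finset.sum_fiberwise_of_maps_to (fun e he => by
    simp only [Finset.mem_filter, mem_outF] at he
    exact hK e he.1 he.2) _).symm

lemma RE_eq_sumRMs (hsd : sd.r = R) (s : M.S) (K : Finset (Act × Quotient sd))
    (hK : ∀ e, M.src e = s → (M.label e, Quotient.mk sd (M.tgt e)) ∈ K) :
    M.RE s = ∑ k ∈ K, M.RMs k.1 s {v | R k.2.out v} := by
  have : ∀ k ∈ K, M.RMs k.1 s {v | R k.2.out v} =
      ∑ e ∈ (M.outF s).filter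
        (fun e => (M.label e, Quotient.mk sd (M.tgt e)) = k), M.rate e := by
    intro k _
    rw [RMs_eq_filter sd hsd]
    apply Finset.sum_congr _ (fun _ _ => rfl)
    apply Finset.filter_congr
    intro e _
    simp [Prod.ext_iff, Quotient.out_eq, and_comm]
  rw [Finset.sum_congr rfl this, RE_eq_sum]
  exact (Finset.sum_fiberwise_of_maps_to (fun e he => hK e (mem_outF.mp he)) _).symm

end Quot

lemma pathsFinite (M : RLFTS Act) :
    ∀ (n : ℕ) (w : M.S), {es : List M.E | M.IsPathFrom w es ∧ es.length = n}.Finite := by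
  intro n
  induction n with
  | zero =>
    intro w
    apply Set.Finite.subset (Set.finite_singleton ([] : List M.E))
    rintro es ⟨-, h⟩
    rw [List.length_eq_zero_iff] at h
    simp [h]
  | succ n ih =>
    intro w
    apply Set.Finite.subset
      (Set.Finite.biUnion (M.out_finite w)
        (fun e _ => ((ih (M.tgt e)).image (fun es => e :: es))))
    rintro es ⟨hp, hl⟩
    rcases es with _ | ⟨e, es'⟩
    · simp at hl
    · obtain ⟨h1, h2⟩ := hp
      apply Set.mem_biUnion (show e ∈ {e : M.E | M.src e = w} from h1)
      exact ⟨es', ⟨h2, by simpa using hl⟩, rfl⟩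

/-- The set of `(σ,ς,ϱ)`-selected paths from `w`. -/
def pathSet (M : RLFTS Act) (w : M.S) (σ : List Act) (ς ϱ : List ℝ) : Set (List M.E) :=
  {es | M.IsPathFrom w es ∧ es.map M.label = σ ∧
    (M.visits w es).map M.SJ = ς ∧ (M.visits w es).map M.RP = ϱ}

lemma pathSet_finite (M : RLFTS Act) (w : M.S) (σ : List Act) (ς ϱ : List ℝ) :
    (M.pathSet w σ ς ϱ).Finite := by
  apply Set.Finite.subset (M.pathsFinite σ.length w)
  rintro es ⟨h1, h2, -⟩
  exact ⟨h1, by rw [← h2, List.length_map]⟩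

lemma PTsel_eq (M : RLFTS Act) (w : M.S) (σ : List Act) (ς ϱ : List ℝ) :
    M.PTsel w σ ς ϱ = ∑ᶠ es ∈ M.pathSet w σ ς ϱ, M.pathPT es := rfl

lemma visits_shape (M : RLFTS Act) (u : M.S) (es : List M.E) :
    ∃ t, M.visits u es = u :: t := by
  cases es <;> exact ⟨_, rfl⟩

lemma PTsel_eq_zero (M : RLFTS Act) (u : M.S) (σ : List Act) (ς ϱ : List ℝ)
    (h : ∀ ς' ϱ', ς = M.SJ u :: ς' → ϱ = M.RP u :: ϱ' → False) :
    M.PTsel u σ ς ϱ = 0 := by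
  rw [PTsel_eq]
  have : M.pathSet u σ ς ϱ = ∅ := by
    ext es
    simp only [Set.mem_empty_iff_false, iff_false]
    rintro ⟨-, -, hς, hϱ⟩
    obtain ⟨t, ht⟩ := M.visits_shape u es
    rw [ht] at hς hϱ
    exact h _ _ hς.symm hϱ.symm
  rw [this, finsum_mem_empty]

lemma PTsel_nil (M : RLFTS Act) (u : M.S) (ς ϱ : List ℝ) :
    M.PTsel u [] ς ϱ = if ς = [M.SJ u] ∧ ϱ = [M.RP u] then 1 else 0 := by
  rw [PTsel_eq]
  have hset : M.pathSet u [] ς ϱ =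
      if ς = [M.SJ u] ∧ ϱ = [M.RP u] then {([] : List M.E)} else ∅ := by
    ext es
    simp only [pathSet, Set.mem_setOf_eq, List.map_eq_nil_iff]
    split_ifs with hc
    · simp only [Set.mem_singleton_iff]
      constructor
      · rintro ⟨-, h, -⟩; exact h
      · rintro rfl; exact ⟨trivial, rfl, by simp [visits, hc.1], by simp [visits, hc.2]⟩
    · simp only [Set.mem_empty_iff_false, iff_false]
      rintro ⟨-, rfl, h2, h3⟩
      exact hc ⟨by simpa [visits] using h2.symm ▸ rfl, by simp_all [visits]⟩
  rw [hset]
  split_ifs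
  · rw [finsum_mem_singleton]; simp [pathPT]
  · rw [finsum_mem_empty]

lemma pathPT_cons (M : RLFTS Act) (e : M.E) (es : List M.E) :
    M.pathPT (e :: es) = M.PTe e * M.pathPT es := by
  simp [pathPT]

lemma PTsel_cons (M : RLFTS Act) (u : M.S) (a : Act) (σ : List Act) (ς' ϱ' : List ℝ) :
    M.PTsel u (a :: σ) (M.SJ u :: ς') (M.RP u :: ϱ') =
      ∑ e ∈ (M.outF u).filter (fun e => M.label e = a),
        M.PTe e * M.PTsel (M.tgt e) σ ς' ϱ' := by
  rw [PTsel_eq]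
  have hA : ({e : M.E | M.src e = u ∧ M.label e = a} : Set M.E) =
      ↑((M.outF u).filter (fun e => M.label e = a)) := by
    ext e; simp [mem_outF]
  have hset : M.pathSet u (a :: σ) (M.SJ u :: ς') (M.RP u :: ϱ') =
      ⋃ e ∈ {e : M.E | M.src e = u ∧ M.label e = a},
        (fun es => e :: es) '' M.pathSet (M.tgt e) σ ς' ϱ' := by
    ext es
    constructor
    · rintro ⟨hp, hl, hsj, hrp⟩
      rcases es with _ | ⟨e, es'⟩
      · simp at hl
      · obtain ⟨h1, h2⟩ := hp
        simp only [List.map_cons, List.cons.injEq] at hl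
        simp only [visits, List.map_cons, List.cons.injEq] at hsj hrp
        exact Set.mem_biUnion (show (e : M.E) ∈ {e : M.E | M.src e = u ∧ M.label e = a}
          from ⟨h1, hl.1⟩) ⟨es', ⟨h2, hl.2, hsj.2, hrp.2⟩, rfl⟩
    · intro hes
      simp only [Set.mem_iUnion, Set.mem_image, Set.mem_setOf_eq] at hes
      obtain ⟨e, ⟨h1, h2⟩, es', ⟨hp, hl, hsj, hrp⟩, rfl⟩ := hes
      exact ⟨⟨h1, hp⟩, by simp [hl, h2], by simp [visits, hsj], by simp [visits, hrp]⟩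
  rw [hset]
  rw [finsum_mem_biUnion]
  · rw [hA, finsum_mem_coe_finset]
    apply Finset.sum_congr rfl
    intro e _
    rw [finsum_mem_image (Set.injOn_of_injective (fun x y h => (List.cons.injEq _ _ _ _ ▸ h).2))]
    rw [finsum_mem_eq_finite_toFinset_sum _ (M.pathSet_finite (M.tgt e) σ ς' ϱ')]
    simp only [pathPT_cons]
    rw [← Finset.mul_sum]
    rw [PTsel_eq, finsum_mem_eq_finite_toFinset_sum _ (M.pathSet_finite (M.tgt e) σ ς' ϱ')]
  · intro e1 h1 e2 h2 hne
    simp only [Function.onFun, Set.disjoint_left]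
    rintro es ⟨es1, -, rfl⟩ ⟨es2, -, h⟩
    exact hne (List.cons.injEq _ _ _ _ ▸ h).1.symm
  · exact Set.Finite.subset (M.out_finite u) (fun e he => he.1)
  · intro e _
    exact (M.pathSet_finite (M.tgt e) σ ς' ϱ').image _

theorem key_bisim (M : RLFTS Act) (R : M.S → M.S → Prop) (hR : M.SelfBisim R) :
    ∀ (σ : List Act) (ς ϱ : List ℝ) (u v : M.S), R u v →
      M.PTsel u σ ς ϱ = M.PTsel v σ ς ϱ := by
  obtain ⟨hEq, hmain⟩ := hR
  letI sd : Setoid M.S := ⟨R, hEq⟩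
  have hsd : sd.r = R := rfl
  have hRP : ∀ u v, R u v → M.RP u = M.RP v := fun u v h => (hmain u v h).1
  have hRM : ∀ u v, R u v → ∀ a w, M.RMs a u {x | R w x} = M.RMs a v {x | R w x} :=
    fun u v h => (hmain u v h).2
  have hRE : ∀ u v, R u v → M.RE u = M.RE v := by
    intro u v huv
    set κ : M.E → Act × Quotient sd := fun e => (M.label e, Quotient.mk sd (M.tgt e)) with hκ
    set K : Finset (Act × Quotient sd) := (M.outF u).image κ ∪ (M.outF v).image κ with hKdef
    rw [RE_eq_sumRMs sd hsd u K
      (fun e he => Finset.mem_union_left _ (Finset.mem_image_of_mem κ (mem_outF.mpr he)))]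
    rw [RE_eq_sumRMs sd hsd v K
      (fun e he => Finset.mem_union_right _ (Finset.mem_image_of_mem κ (mem_outF.mpr he)))]
    exact Finset.sum_congr rfl (fun k _ => hRM u v huv k.1 k.2.out)
  have hSJ : ∀ u v, R u v → M.SJ u = M.SJ v := by
    intro u v huv; rw [SJ, SJ, hRE u v huv]
  intro σ
  induction σ with
  | nil =>
    intro ς ϱ u v huv
    rw [PTsel_nil, PTsel_nil, hSJ u v huv, hRP u v huv]
  | cons a σ ih =>
    intro ς ϱ u v huv
    have hsj := hSJ u v huv
    have hrp := hRP u v huv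
    rcases ς with _ | ⟨x, ς'⟩
    · rw [M.PTsel_eq_zero u _ _ _ (fun _ _ h _ => by cases h),
        M.PTsel_eq_zero v _ _ _ (fun _ _ h _ => by cases h)]
    rcases ϱ with _ | ⟨y, ϱ'⟩
    · rw [M.PTsel_eq_zero u _ _ _ (fun _ _ _ h => by cases h),
        M.PTsel_eq_zero v _ _ _ (fun _ _ _ h => by cases h)]
    by_cases hx : x = M.SJ u
    · by_cases hy : y = M.RP u
      · subst hx hy
        conv_rhs => rw [hsj, hrp]
        rw [PTsel_cons, PTsel_cons]
        set G : Quotient sd → ℝ := fun q => M.PTsel q.out σ ς' ϱ' with hG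
        have hGval : ∀ w, M.PTsel w σ ς' ϱ' = G (Quotient.mk sd w) := by
          intro w
          apply ih ς' ϱ' w (Quotient.mk sd w).out
          exact hEq.symm (Quotient.exact (Quotient.out_eq (Quotient.mk sd w)))
        have hstep : ∀ (z : M.S), ∑ e ∈ (M.outF z).filter (fun e => M.label e = a),
            M.PTe e * M.PTsel (M.tgt e) σ ς' ϱ' =
            (M.RE z)⁻¹ * ∑ e ∈ (M.outF z).filter (fun e => M.label e = a),
              M.rate e * G (Quotient.mk sd (M.tgt e)) := by
          intro z
          rw [Finset.mul_sum]
          apply Finset.sum_congr rfl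
          intro e he
          simp only [Finset.mem_filter, mem_outF] at he
          rw [hGval, PTe, he.1, div_eq_mul_inv]
          ring
        rw [hstep u, hstep v]
        set κ : M.E → Quotient sd := fun e => Quotient.mk sd (M.tgt e) with hκ
        set K : Finset (Quotient sd) :=
          ((M.outF u).filter (fun e => M.label e = a)).image κ ∪
          ((M.outF v).filter (fun e => M.label e = a)).image κ with hK
        rw [sum_out_eq sd hsd u a G K (fun e he hl => Finset.mem_union_left _
          (Finset.mem_image_of_mem κ (Finset.mem_filter.mpr ⟨mem_outF.mpr he, hl⟩)))]
        rw [sum_out_eq sd hsd v a G K (fun e he hl => Finset.mem_union_right _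
          (Finset.mem_image_of_mem κ (Finset.mem_filter.mpr ⟨mem_outF.mpr he, hl⟩)))]
        rw [hRE u v huv]
        exact congrArg _ (Finset.sum_congr rfl (fun q _ => by rw [hRM u v huv a q.out]))
      · rw [M.PTsel_eq_zero u _ _ _ (fun _ _ _ h => hy (List.cons.injEq _ _ _ _ ▸ h).1),
          M.PTsel_eq_zero v _ _ _ (fun _ _ _ h => (hy (hrp ▸ (List.cons.injEq _ _ _ _ ▸ h).1)))]
    · rw [M.PTsel_eq_zero u _ _ _ (fun _ _ h _ => hx (List.cons.injEq _ _ _ _ ▸ h).1),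
        M.PTsel_eq_zero v _ _ _ (fun _ _ h _ => (hx (hsj ▸ (List.cons.injEq _ _ _ _ ▸ h).1)))]


/-! ### The combined RLFTS of two RLFTSs -/

noncomputable def comb (N N' : RLFTS Act) : RLFTS Act where
  S := N.S ⊕ N'.S
  E := N.E ⊕ N'.E
  s0 := Sum.inl N.s0
  src := csrc N N'
  tgt := ctgt N N'
  rate := crate N N'
  label := clabel N N'
  RP := cRP N N'
  rate_pos := by rintro (e | e) <;> [exact N.rate_pos e; exact N'.rate_pos e]
  out_finite := by
    rintro (s | s)
    · have h : {e : N.E ⊕ N'.E | csrc N N' e = Sum.inl s} =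
          Sum.inl '' {e : N.E | N.src e = s} := by
        ext (e | e) <;> simp [csrc]
      rw [h]; exact (N.out_finite s).image _
    · have h : {e : N.E ⊕ N'.E | csrc N N' e = Sum.inr s} =
          Sum.inr '' {e : N'.E | N'.src e = s} := by
        ext (e | e) <;> simp [csrc]
      rw [h]; exact (N'.out_finite s).image _
  out_nonempty := by
    rintro (s | s)
    · obtain ⟨e, he⟩ := N.out_nonempty s
      exact ⟨Sum.inl e, by simp [csrc, he]⟩
    · obtain ⟨e, he⟩ := N'.out_nonempty s
      exact ⟨Sum.inr e, by simp [csrc, he]⟩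

variable {N N' : RLFTS Act}

lemma comb_RE_inl (s : N.S) : (comb N N').RE (Sum.inl s) = N.RE s := by
  erw [RE, RE]
  have h : {e : (comb N N').E | (comb N N').src e = Sum.inl s} =
      Sum.inl '' {e : N.E | N.src e = s} := by
    ext (e | e) <;> erw [Set.mem_setOf_eq, Set.mem_image] <;> simp [comb, csrc]
  rw [h]
  exact (finsum_mem_image Sum.inl_injective.injOn).trans
    (finsum_mem_congr rfl (fun e _ => rfl))

lemma comb_RE_inr (s : N'.S) : (comb N N').RE (Sum.inr s) = N'.RE s := by
  erw [RE, RE]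
  have h : {e : (comb N N').E | (comb N N').src e = Sum.inr s} =
      Sum.inr '' {e : N'.E | N'.src e = s} := by
    ext (e | e) <;> erw [Set.mem_setOf_eq, Set.mem_image] <;> simp [comb, csrc]
  rw [h]
  exact (finsum_mem_image Sum.inr_injective.injOn).trans
    (finsum_mem_congr rfl (fun e _ => rfl))

lemma comb_SJ_inl (s : N.S) : (comb N N').SJ (Sum.inl s) = N.SJ s := by
  erw [SJ, SJ, comb_RE_inl]

lemma comb_SJ_inr (s : N'.S) : (comb N N').SJ (Sum.inr s) = N'.SJ s := by
  erw [SJ, SJ, comb_RE_inr]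

lemma comb_PTe_inl (e : N.E) : (comb N N').PTe (Sum.inl e) = N.PTe e := by
  erw [PTe, PTe]
  show N.rate e / (comb N N').RE (Sum.inl (N.src e)) = _
  rw [comb_RE_inl]

lemma comb_PTe_inr (e : N'.E) : (comb N N').PTe (Sum.inr e) = N'.PTe e := by
  erw [PTe, PTe]
  show N'.rate e / (comb N N').RE (Sum.inr (N'.src e)) = _
  rw [comb_RE_inr]

lemma comb_path_inl : ∀ (es : List N.E) (s : N.S), N.IsPathFrom s es →
    (comb N N').IsPathFrom (Sum.inl s) (es.map Sum.inl)
  | [], s, _ => trivial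
  | e :: es, s, ⟨h1, h2⟩ => ⟨congrArg Sum.inl h1, comb_path_inl es (N.tgt e) h2⟩

lemma comb_path_inr : ∀ (es : List N'.E) (s : N'.S), N'.IsPathFrom s es →
    (comb N N').IsPathFrom (Sum.inr s) (es.map Sum.inr)
  | [], s, _ => trivial
  | e :: es, s, ⟨h1, h2⟩ => ⟨congrArg Sum.inr h1, comb_path_inr es (N'.tgt e) h2⟩

lemma comb_visits_inl : ∀ (es : List N.E) (s : N.S),
    (comb N N').visits (Sum.inl s) (es.map Sum.inl) = (N.visits s es).map Sum.inl
  | [], s => rfl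
  | e :: es, s => congrArg (Sum.inl s :: ·) (comb_visits_inl es (N.tgt e))

lemma comb_visits_inr : ∀ (es : List N'.E) (s : N'.S),
    (comb N N').visits (Sum.inr s) (es.map Sum.inr) = (N'.visits s es).map Sum.inr
  | [], s => rfl
  | e :: es, s => congrArg (Sum.inr s :: ·) (comb_visits_inr es (N'.tgt e))

lemma comb_path_inv_inl : ∀ (es' : List (comb N N').E) (s : N.S),
    (comb N N').IsPathFrom (Sum.inl s) es' →
    ∃ es : List N.E, es' = es.map Sum.inl ∧ N.IsPathFrom s es := by
  intro es'
  induction es' with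
  | nil => exact fun s _ => ⟨[], rfl, trivial⟩
  | cons e' t ih =>
    rintro s ⟨h1, h2⟩
    rcases e' with e | e
    · have hs : N.src e = s := Sum.inl_injective h1
      obtain ⟨es, rfl, hp⟩ := ih (N.tgt e) h2
      exact ⟨e :: es, rfl, hs, hp⟩
    · exact absurd h1 (by simp [comb, csrc])

lemma comb_path_inv_inr : ∀ (es' : List (comb N N').E) (s : N'.S),
    (comb N N').IsPathFrom (Sum.inr s) es' →
    ∃ es : List N'.E, es' = es.map Sum.inr ∧ N'.IsPathFrom s es := by
  intro es'
  induction es' with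
  | nil => exact fun s _ => ⟨[], rfl, trivial⟩
  | cons e' t ih =>
    rintro s ⟨h1, h2⟩
    rcases e' with e | e
    · exact absurd h1 (by simp [comb, csrc])
    · have hs : N'.src e = s := Sum.inr_injective h1
      obtain ⟨es, rfl, hp⟩ := ih (N'.tgt e) h2
      exact ⟨e :: es, rfl, hs, hp⟩

lemma comb_pathPT_inl (es : List N.E) :
    (comb N N').pathPT (es.map Sum.inl) = N.pathPT es := by
  erw [pathPT, pathPT, List.map_map]
  have h : (comb N N').PTe ∘ Sum.inl = N.PTe := funext comb_PTe_inl
  rw [h]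

lemma comb_pathPT_inr (es : List N'.E) :
    (comb N N').pathPT (es.map Sum.inr) = N'.pathPT es := by
  erw [pathPT, pathPT, List.map_map]
  have h : (comb N N').PTe ∘ Sum.inr = N'.PTe := funext comb_PTe_inr
  rw [h]

lemma comb_PTsel_inl (s : N.S) (σ : List Act) (ς ϱ : List ℝ) :
    (comb N N').PTsel (Sum.inl s) σ ς ϱ = N.PTsel s σ ς ϱ := by
  have hSJf : (comb N N').SJ ∘ Sum.inl = N.SJ := funext comb_SJ_inl
  erw [PTsel_eq, PTsel_eq]
  have hset : (comb N N').pathSet (Sum.inl s) σ ς ϱ =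
      (List.map Sum.inl) '' (N.pathSet s σ ς ϱ) := by
    ext es'
    constructor
    · rintro ⟨hp, hl, hsj, hrp⟩
      obtain ⟨es, rfl, hpN⟩ := comb_path_inv_inl es' s hp
      refine ⟨es, ⟨hpN, ?_, ?_, ?_⟩, rfl⟩
      · erw [← hl, List.map_map]; rfl
      · erw [← hsj, comb_visits_inl, List.map_map, hSJf]
      · erw [← hrp, comb_visits_inl, List.map_map]; rfl
    · rintro ⟨es, ⟨hp, hl, hsj, hrp⟩, rfl⟩
      refine ⟨comb_path_inl es s hp, ?_, ?_, ?_⟩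
      · erw [List.map_map]; exact hl
      · erw [comb_visits_inl, List.map_map, hSJf]; exact hsj
      · erw [comb_visits_inl, List.map_map]; exact hrp
  rw [hset]
  exact (finsum_mem_image (List.map_injective_iff.mpr Sum.inl_injective).injOn).trans
    (finsum_mem_congr rfl (fun es _ => comb_pathPT_inl es))

lemma comb_PTsel_inr (s : N'.S) (σ : List Act) (ς ϱ : List ℝ) :
    (comb N N').PTsel (Sum.inr s) σ ς ϱ = N'.PTsel s σ ς ϱ := by
  have hSJf : (comb N N').SJ ∘ Sum.inr = N'.SJ := funext comb_SJ_inr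
  erw [PTsel_eq, PTsel_eq]
  have hset : (comb N N').pathSet (Sum.inr s) σ ς ϱ =
      (List.map Sum.inr) '' (N'.pathSet s σ ς ϱ) := by
    ext es'
    constructor
    · rintro ⟨hp, hl, hsj, hrp⟩
      obtain ⟨es, rfl, hpN⟩ := comb_path_inv_inr es' s hp
      refine ⟨es, ⟨hpN, ?_, ?_, ?_⟩, rfl⟩
      · erw [← hl, List.map_map]; rfl
      · erw [← hsj, comb_visits_inr, List.map_map, hSJf]
      · erw [← hrp, comb_visits_inr, List.map_map]; rfl
    · rintro ⟨es, ⟨hp, hl, hsj, hrp⟩, rfl⟩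
      refine ⟨comb_path_inr es s hp, ?_, ?_, ?_⟩
      · erw [List.map_map]; exact hl
      · erw [comb_visits_inr, List.map_map, hSJf]; exact hsj
      · erw [comb_visits_inr, List.map_map]; exact hrp
  rw [hset]
  exact (finsum_mem_image (List.map_injective_iff.mpr Sum.inr_injective).injOn).trans
    (finsum_mem_congr rfl (fun es _ => comb_pathPT_inr es))

end RLFTS

/-- Fluid bisimulation equivalence implies fluid trace equivalence. -/
theorem RLFTS.fluidBisimEquiv_implies_fluidTraceEquiv {Act : Type} (N N' : RLFTS Act)
    (h : RLFTS.FluidBisimEquiv N N') : RLFTS.FluidTraceEquiv N N' := by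
  obtain ⟨R, hEq, hInit, hStep⟩ := h
  intro σ ς ϱ _
  have hself : (RLFTS.comb N N').SelfBisim R :=
    ⟨hEq, fun s1 s2 h12 => ⟨(hStep s1 s2 h12).1, fun a w => (hStep s1 s2 h12).2 a w⟩⟩
  rw [← RLFTS.comb_PTsel_inl (N' := N') N.s0 σ ς ϱ,
    ← RLFTS.comb_PTsel_inr (N := N) N'.s0 σ ς ϱ]
  exact RLFTS.key_bisim _ R hself σ ς ϱ _ _ hInit
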